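/- Let r : ℝ → ℝ be twice differentiable with r'(τ) > 0 and r''(τ) > 0 for all τ ≥ 0, and let c : ℝ → ℝ be continuous with c(τ) ≥ r'(τ)²/r''(τ) for all τ ≥ 0. Then for every t ≥ 0 the function τ ↦ 1/c(τ) is integrable on (t, ∞) and ∫_{(t,∞)} 1/c(τ) dτ ≤ 1/r'(t). -/

import Mathlib

open MeasureTheory Filter Set

/-- The estimate `∫_t^∞ 1/c(τ) dτ ≤ 1/r'(t)` from the final part of the proof of
existence of admissible functions: if `c ≥ r'²/r''` on `[0,∞)` with `r', r'' > 0` there,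
then `1/c` is integrable on `(t,∞)` and its integral is at most `1/r'(t)`. -/
theorem background_cohomology_tail_integral_bound
    (r r' r'' : ℝ → ℝ)
    (hr : ∀ τ : ℝ, HasDerivAt r (r' τ) τ)
    (hr' : ∀ τ : ℝ, HasDerivAt r' (r'' τ) τ)
    (hr'pos : ∀ τ ≥ (0 : ℝ), 0 < r' τ)
    (hr''pos : ∀ τ ≥ (0 : ℝ), 0 < r'' τ)
    (c : ℝ → ℝ) (hc : Continuous c)
    (hcge : ∀ τ ≥ (0 : ℝ), r' τ ^ 2 / r'' τ ≤ c τ) :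
    ∀ t ≥ (0 : ℝ),
      IntegrableOn (fun τ => 1 / c τ) (Set.Ioi t) ∧
      (∫ τ in Set.Ioi t, 1 / c τ) ≤ 1 / r' t := by
  intro t ht
  have hcpos : ∀ τ ≥ (0 : ℝ), 0 < c τ := fun τ hτ =>
    lt_of_lt_of_le (div_pos (pow_pos (hr'pos τ hτ) 2) (hr''pos τ hτ)) (hcge τ hτ)
  have hle : ∀ τ ≥ (0 : ℝ), 1 / c τ ≤ r'' τ / r' τ ^ 2 := by
    intro τ hτ
    have h := one_div_le_one_div_of_le
      (div_pos (pow_pos (hr'pos τ hτ) 2) (hr''pos τ hτ)) (hcge τ hτ)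
    rwa [one_div_div] at h
  have hderiv : ∀ τ ≥ (0 : ℝ),
      HasDerivAt (fun τ => -(r' τ)⁻¹) (r'' τ / r' τ ^ 2) τ := by
    intro τ hτ
    have h := ((hr' τ).inv (ne_of_gt (hr'pos τ hτ))).neg
    exact h.congr_deriv (by ring)
  -- integrability of `1/c` on compact intervals
  have hIoc : ∀ b : ℝ, IntegrableOn (fun τ => 1 / c τ) (Set.Ioc t b) := by
    intro b
    refine (ContinuousOn.integrableOn_Icc ?_).mono_set Ioc_subset_Icc_self
    exact continuousOn_const.div hc.continuousOn
      (fun x hx => ne_of_gt (hcpos x (le_trans ht hx.1)))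
  -- the derivative `r''/r'²` is interval integrable on `[t,b]` for `b ≥ t`
  have hderint : ∀ b, t ≤ b → IntervalIntegrable (fun τ => r'' τ / r' τ ^ 2) volume t b := by
    intro b hb
    apply intervalIntegral.intervalIntegrable_deriv_of_nonneg (g := fun τ => -(r' τ)⁻¹)
    · intro x hx
      rw [uIcc_of_le hb] at hx
      exact ((hderiv x (le_trans ht hx.1)).continuousAt).continuousWithinAt
    · intro x hx
      rw [min_eq_left hb] at hx
      exact hderiv x (le_trans ht hx.1.le)
    · intro x hx
      rw [min_eq_left hb] at hx
      have hx0 : (0:ℝ) ≤ x := le_trans ht hx.1.le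
      exact le_of_lt (div_pos (hr''pos x hx0) (pow_pos (hr'pos x hx0) 2))
  -- the key interval bound
  have hbound : ∀ b, t ≤ b → (∫ τ in t..b, 1 / c τ) ≤ 1 / r' t := by
    intro b hb
    have h1 : (∫ τ in t..b, 1 / c τ) ≤ ∫ τ in t..b, r'' τ / r' τ ^ 2 := by
      apply intervalIntegral.integral_mono_on hb
      · exact (intervalIntegrable_iff_integrableOn_Ioc_of_le hb).2 (hIoc b)
      · exact hderint b hb
      · intro x hx
        exact hle x (le_trans ht hx.1)
    have h2 : (∫ τ in t..b, r'' τ / r' τ ^ 2) = (r' t)⁻¹ - (r' b)⁻¹ := by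
      rw [intervalIntegral.integral_eq_sub_of_hasDerivAt
        (fun x hx => by rw [uIcc_of_le hb] at hx; exact hderiv x (le_trans ht hx.1))
        (hderint b hb)]
      ring
    have h3 : (0:ℝ) ≤ (r' b)⁻¹ := (inv_pos.2 (hr'pos b (le_trans ht hb))).le
    calc (∫ τ in t..b, 1 / c τ) ≤ (r' t)⁻¹ - (r' b)⁻¹ := h1.trans_eq h2
      _ ≤ (r' t)⁻¹ := by linarith
      _ = 1 / r' t := (one_div _).symm
  -- integrability on `Ioi t`
  have hint : IntegrableOn (fun τ => 1 / c τ) (Set.Ioi t) := by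
    apply integrableOn_Ioi_of_intervalIntegral_norm_bounded (1 / r' t) t hIoc
      (tendsto_id (α := ℝ))
    filter_upwards [eventually_ge_atTop t] with b hb
    have : (∫ τ in t..b, ‖1 / c τ‖) = ∫ τ in t..b, 1 / c τ := by
      apply intervalIntegral.integral_congr
      intro x hx
      rw [uIcc_of_le hb] at hx
      exact Real.norm_of_nonneg (le_of_lt (div_pos one_pos (hcpos x (le_trans ht hx.1))))
    rw [this]
    exact hbound b hb
  refine ⟨hint, ?_⟩
  have htendsto := intervalIntegral_tendsto_integral_Ioi t hint (tendsto_id (α := ℝ))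
  exact le_of_tendsto htendsto ((eventually_ge_atTop t).mono fun b hb => hbound b hb)
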